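/- Let λ ∈ (0,1). Then ∑_{x=2}^∞ (x(x-1)^{x-2}/(x-2)!) λ^x e^{-xλ} = ((1-λ+λ²)/(1-λ)³) λ e^{-λ} − λ e^{-λ}. -/

import Mathlib

open Finset Real
open scoped NNReal ENNReal

noncomputable def Sfd (N m : ℕ) : ℝ :=
  ∑ n ∈ Finset.range (N + 1), (-1 : ℝ) ^ (N - n) * (N.choose n) * (n : ℝ) ^ m

lemma key_bound (n : ℕ) : (n : ℝ) ^ n / n.factorial ≤ Real.exp 1 ^ n := by
  have h := Real.pow_div_factorial_le_exp (x := (n : ℝ)) (Nat.cast_nonneg n) n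
  calc (n : ℝ) ^ n / n.factorial ≤ Real.exp n := h
    _ = Real.exp 1 ^ n := by rw [← Real.exp_nat_mul]; norm_num

lemma percalc (d N n : ℕ) (lam : ℝ) (hle : n ≤ N) :
    ((n : ℝ) ^ (n + d) / n.factorial) * lam ^ n
          * ((-(n : ℝ) * lam) ^ (N - n) / (N - n).factorial)
      = (-1 : ℝ) ^ (N - n) * (N.choose n) * (n : ℝ) ^ (N + d) / N.factorial * lam ^ N := by
  have hfac : ((N.choose n : ℝ)) * (n.factorial) * ((N - n).factorial) = N.factorial := by
    exact_mod_cast congrArg (Nat.cast (R := ℝ)) (Nat.choose_mul_factorial_mul_factorial hle)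
  have hpow1 : (n : ℝ) ^ (n + d) * (n : ℝ) ^ (N - n) = (n : ℝ) ^ (N + d) := by
    rw [← pow_add]; congr 1; omega
  have hpow2 : lam ^ n * lam ^ (N - n) = lam ^ N := by
    rw [← pow_add]; congr 1; omega
  have hneg : (-(n : ℝ) * lam) ^ (N - n)
      = (-1 : ℝ) ^ (N - n) * ((n : ℝ) ^ (N - n) * lam ^ (N - n)) := by
    rw [show -(n:ℝ) * lam = (-1) * ((n:ℝ) * lam) by ring, mul_pow, mul_pow]
  have h1 : (n.factorial : ℝ) ≠ 0 := Nat.cast_ne_zero.mpr n.factorial_ne_zero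
  have h2 : ((N - n).factorial : ℝ) ≠ 0 := Nat.cast_ne_zero.mpr (N - n).factorial_ne_zero
  have h3 : (N.factorial : ℝ) ≠ 0 := Nat.cast_ne_zero.mpr N.factorial_ne_zero
  calc ((n : ℝ) ^ (n + d) / n.factorial) * lam ^ n
          * ((-(n : ℝ) * lam) ^ (N - n) / (N - n).factorial)
      = (-1 : ℝ) ^ (N - n) * (((n : ℝ) ^ (n + d) * (n : ℝ) ^ (N - n))
          * (lam ^ n * lam ^ (N - n))) / (n.factorial * (N - n).factorial) := by
        rw [hneg]; ring
    _ = (-1 : ℝ) ^ (N - n) * ((n : ℝ) ^ (N + d) * lam ^ N)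
          / (n.factorial * (N - n).factorial) := by rw [hpow1, hpow2]
    _ = (-1 : ℝ) ^ (N - n) * (N.choose n) * (n : ℝ) ^ (N + d) / N.factorial * lam ^ N := by
        field_simp
        linear_combination (-((n : ℝ) ^ N * (n : ℝ) ^ d * lam ^ N)) * hfac

lemma rowcalc (d N : ℕ) (lam : ℝ) :
    ∑ n ∈ Finset.range (N + 1),
        ((n : ℝ) ^ (n + d) / n.factorial) * lam ^ n
          * ((-(n : ℝ) * lam) ^ (N - n) / (N - n).factorial)
      = (Sfd N (N + d) / N.factorial) * lam ^ N := by
  unfold Sfd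
  rw [Finset.sum_div, Finset.sum_mul]
  refine Finset.sum_congr rfl fun n hn => ?_
  have hle : n ≤ N := by have := Finset.mem_range.mp hn; omega
  rw [percalc d N n lam hle]

noncomputable def pterm (d : ℕ) (lam : ℝ) (n : ℕ) : ℝ :=
  (n : ℝ) ^ (n + d) * lam ^ n * Real.exp (-(n : ℝ) * lam) / n.factorial

lemma pterm_nonneg (d : ℕ) {lam : ℝ} (h0 : 0 ≤ lam) (n : ℕ) : 0 ≤ pterm d lam n := by
  unfold pterm; positivity

lemma pterm_le (d : ℕ) {lam : ℝ} (h0 : 0 ≤ lam) (n : ℕ) :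
    pterm d lam n ≤ (n : ℝ) ^ d * (Real.exp 1 * lam) ^ n := by
  unfold pterm
  have hexp : Real.exp (-(n : ℝ) * lam) ≤ 1 := by
    rw [Real.exp_le_one_iff]
    have : (0:ℝ) ≤ (n : ℝ) * lam := by positivity
    linarith
  calc (n : ℝ) ^ (n + d) * lam ^ n * Real.exp (-(n : ℝ) * lam) / n.factorial
      ≤ (n : ℝ) ^ (n + d) * lam ^ n * 1 / n.factorial := by
        have h1 : (0:ℝ) < n.factorial := by positivity
        gcongr
    _ = ((n : ℝ) ^ n / n.factorial) * ((n : ℝ) ^ d * lam ^ n) := by rw [pow_add]; ring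
    _ ≤ Real.exp 1 ^ n * ((n : ℝ) ^ d * lam ^ n) := by
        have := key_bound n
        gcongr
    _ = (n : ℝ) ^ d * (Real.exp 1 * lam) ^ n := by rw [mul_pow]; ring

lemma pterm_summable (d : ℕ) {lam : ℝ} (h0 : 0 ≤ lam) (h : Real.exp 1 * lam < 1) :
    Summable (pterm d lam) := by
  refine Summable.of_nonneg_of_le (pterm_nonneg d h0) (pterm_le d h0) ?_
  refine summable_pow_mul_geometric_of_norm_lt_one d ?_
  rw [Real.norm_eq_abs, abs_of_nonneg (by positivity)]
  exact h

lemma exp_hasSum (x : ℝ) : HasSum (fun j : ℕ => x ^ j / j.factorial) (Real.exp x) := by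
  rw [Real.exp_eq_exp_ℝ]
  exact NormedSpace.expSeries_div_hasSum_exp x

set_option maxHeartbeats 1000000 in
lemma master (d : ℕ) {lam : ℝ} (h0 : 0 < lam) (h8 : lam ≤ 1/8) :
    ∑' n, pterm d lam n = ∑' N : ℕ, (Sfd N (N + d) / N.factorial) * lam ^ N := by
  have hl1 : 0 ≤ lam := h0.le
  set F : ℕ × ℕ → ℝ := fun p =>
    ((p.1 : ℝ) ^ (p.1 + d) / p.1.factorial) * lam ^ p.1
      * ((-(p.1 : ℝ) * lam) ^ p.2 / p.2.factorial) with hF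
  set G : ℕ × ℕ → ℝ := fun p =>
    ((p.1 : ℝ) ^ (p.1 + d) / p.1.factorial) * lam ^ p.1
      * (((p.1 : ℝ) * lam) ^ p.2 / p.2.factorial) with hG
  have habsFG : ∀ p, |F p| = G p := by
    intro ⟨n, j⟩
    simp [hF, hG, abs_mul, abs_div, abs_pow, abs_neg, Nat.abs_cast,
      abs_of_nonneg hl1]
  -- row sums of G
  have hGrow : ∀ n : ℕ, HasSum (fun j => G (n, j))
      (((n : ℝ) ^ (n + d) / n.factorial) * lam ^ n * Real.exp ((n : ℝ) * lam)) :=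
    fun n => (exp_hasSum ((n : ℝ) * lam)).mul_left _
  have hr : Real.exp 1 * lam * Real.exp lam < 1 := by
    have h1 : Real.exp lam ≤ Real.exp 1 := Real.exp_le_exp.mpr (by linarith)
    have h2 : Real.exp 1 * lam * Real.exp lam ≤ Real.exp 1 * lam * Real.exp 1 := by
      have : 0 ≤ Real.exp 1 * lam := by positivity
      exact mul_le_mul_of_nonneg_left h1 this
    have hEE : (0:ℝ) < Real.exp 1 * Real.exp 1 := by positivity
    have h3 : Real.exp 1 * lam * Real.exp 1 ≤ Real.exp 1 * (1/8) * Real.exp 1 := by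
      nlinarith
    have h4 : Real.exp 1 < 2.7182818286 := Real.exp_one_lt_d9
    nlinarith [Real.exp_pos 1]
  have hGsum : Summable G := by
    rw [summable_prod_of_nonneg (by intro p; simp only [hG]; positivity)]
    constructor
    · exact fun n => (hGrow n).summable
    · refine Summable.of_nonneg_of_le (fun n => ?_) (fun n => ?_)
        (summable_pow_mul_geometric_of_norm_lt_one d
          (r := Real.exp 1 * lam * Real.exp lam) ?_)
      · rw [(hGrow n).tsum_eq]; positivity
      · rw [(hGrow n).tsum_eq]
        calc ((n : ℝ) ^ (n + d) / n.factorial) * lam ^ n * Real.exp ((n : ℝ) * lam)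
            = ((n:ℝ)^n / n.factorial) * ((n:ℝ)^d * (lam ^ n * Real.exp lam ^ n)) := by
              rw [pow_add, Real.exp_nat_mul]; ring
          _ ≤ Real.exp 1 ^ n * ((n:ℝ)^d * (lam ^ n * Real.exp lam ^ n)) := by
              have := key_bound n
              gcongr
          _ = (n : ℝ) ^ d * (Real.exp 1 * lam * Real.exp lam) ^ n := by
              rw [mul_pow, mul_pow]; ring
      · rw [Real.norm_eq_abs, abs_of_nonneg (by positivity)]; exact hr
  have hFsum : Summable F := by
    refine summable_abs_iff.mp ?_
    simpa only [funext habsFG] using hGsum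
  -- rows of F sum to pterm
  have hFrow : ∀ n : ℕ, HasSum (fun j => F (n, j)) (pterm d lam n) := by
    intro n
    have := (exp_hasSum (-(n : ℝ) * lam)).mul_left
      (((n : ℝ) ^ (n + d) / n.factorial) * lam ^ n)
    rw [show pterm d lam n = ((n:ℝ)^(n+d)/n.factorial * lam^n) * Real.exp (-(n:ℝ)*lam) by unfold pterm; ring]
    exact this
  -- step 1 : tsum pterm = tsum over prod
  have step1 : ∑' n, pterm d lam n = ∑' p : ℕ × ℕ, F p := by
    rw [hFsum.tsum_prod]
    exact (tsum_congr fun n => ((hFrow n).tsum_eq).symm)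
  -- step 2 : regroup along antidiagonals
  have step2 : ∑' p : ℕ × ℕ, F p
      = ∑' N : ℕ, ∑ p ∈ Finset.HasAntidiagonal.antidiagonal N, F p := by
    have hsig : Summable (fun c : (Σ N : ℕ, Finset.HasAntidiagonal.antidiagonal N) =>
        F (Finset.HasAntidiagonal.sigmaAntidiagonalEquivProd c)) :=
      Finset.HasAntidiagonal.sigmaAntidiagonalEquivProd.summable_iff.mpr hFsum
    rw [← Finset.HasAntidiagonal.sigmaAntidiagonalEquivProd.tsum_eq F]
    rw [Summable.tsum_sigma' (fun N => (hasSum_fintype _).summable) hsig]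
    refine tsum_congr fun N => ?_
    simp only [Finset.HasAntidiagonal.sigmaAntidiagonalEquivProd_apply]
    exact Finset.tsum_subtype (Finset.HasAntidiagonal.antidiagonal N) F
  rw [step1, step2]
  refine tsum_congr fun N => ?_
  rw [Finset.Nat.sum_antidiagonal_eq_sum_range_succ_mk]
  exact rowcalc d N lam

lemma Sfd_zero' {N : ℕ} (hN : 1 ≤ N) : Sfd N 0 = 0 := by
  have h := add_pow (1 : ℝ) (-1) N
  simp only [one_pow, one_mul, add_neg_cancel] at h
  have h0 : (0:ℝ) ^ N = 0 := zero_pow (by omega)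
  rw [h0] at h
  unfold Sfd
  simp only [pow_zero, mul_one]
  rw [← h]

lemma Sfd_rec (N m : ℕ) :
    Sfd (N + 1) (m + 1)
      = (N + 1) * ∑ i ∈ Finset.range (m + 1), (m.choose i : ℝ) * Sfd N i := by
  unfold Sfd
  rw [Finset.sum_range_succ']
  simp only [Nat.cast_zero, ne_eq, zero_pow (Nat.succ_ne_zero m), mul_zero, add_zero]
  have key : ∀ j ∈ Finset.range (N + 1),
      (-1 : ℝ) ^ (N + 1 - (j + 1)) * ((N + 1).choose (j + 1)) * (((j + 1 : ℕ)) : ℝ) ^ (m + 1)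
        = (N + 1) * ∑ i ∈ Finset.range (m + 1),
            (m.choose i : ℝ) * ((-1 : ℝ) ^ (N - j) * (N.choose j) * (j : ℝ) ^ i) := by
    intro j hj
    push_cast
    have hc : ((N + 1).choose (j + 1) : ℝ) * (j + 1) = (N + 1) * (N.choose j) := by
      have := Nat.add_one_mul_choose_eq N j
      have h2 : ((N + 1) * N.choose j : ℕ) = ((N + 1).choose (j + 1) * (j + 1) : ℕ) := this
      exact_mod_cast h2.symm
    have hpow : ((j : ℝ) + 1) ^ m
        = ∑ i ∈ Finset.range (m + 1), (j : ℝ) ^ i * (m.choose i) := by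
      have := add_pow (j : ℝ) 1 m
      simpa using this
    calc (-1 : ℝ) ^ (N - j) * ((N + 1).choose (j + 1)) * ((j : ℝ) + 1) ^ (m + 1)
        = (-1 : ℝ) ^ (N - j) * (((N + 1).choose (j + 1) : ℝ) * ((j:ℝ)+1)) * ((j : ℝ) + 1) ^ m := by
          ring
      _ = (-1 : ℝ) ^ (N - j) * ((N + 1) * (N.choose j)) * ((j : ℝ) + 1) ^ m := by rw [hc]
      _ = (N + 1) * ∑ i ∈ Finset.range (m + 1),
            (m.choose i : ℝ) * ((-1 : ℝ) ^ (N - j) * (N.choose j) * (j : ℝ) ^ i) := by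
          rw [hpow, Finset.mul_sum, Finset.mul_sum]
          refine Finset.sum_congr rfl fun i _ => by ring
  rw [Finset.sum_congr rfl key, ← Finset.mul_sum, Finset.sum_comm]
  congr 1
  refine Finset.sum_congr rfl fun i _ => ?_
  rw [Finset.mul_sum]

lemma Sfd_eq_zero : ∀ m N : ℕ, m < N → Sfd N m = 0 := by
  intro m
  induction m using Nat.strong_induction_on with
  | _ m ih =>
    intro N hm
    match m, N with
    | 0, N => exact Sfd_zero' (by omega)
    | m + 1, N + 1 =>
      rw [Sfd_rec]
      have hz : ∑ i ∈ Finset.range (m + 1), (m.choose i : ℝ) * Sfd N i = 0 := by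
        refine Finset.sum_eq_zero fun i hi => ?_
        have hi' := Finset.mem_range.mp hi
        rw [ih i (by omega) N (by omega), mul_zero]
      rw [hz, mul_zero]

lemma Sfd_diag (N : ℕ) : Sfd N N = N.factorial := by
  induction N with
  | zero => simp [Sfd]
  | succ N ih =>
    rw [Sfd_rec, Finset.sum_range_succ]
    have hz : ∑ i ∈ Finset.range N, (N.choose i : ℝ) * Sfd N i = 0 :=
      Finset.sum_eq_zero fun i hi =>
        by rw [Sfd_eq_zero i N (Finset.mem_range.mp hi), mul_zero]
    rw [hz, zero_add, Nat.choose_self, ih]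
    push_cast [Nat.factorial_succ]
    ring

lemma Sfd_succ_diag (N : ℕ) : Sfd N (N + 1) = N.factorial * (N * (N + 1)) / 2 := by
  induction N with
  | zero => simp [Sfd]
  | succ N ih =>
    rw [Sfd_rec]
    rw [Finset.sum_range_succ, Finset.sum_range_succ]
    have hz : ∑ i ∈ Finset.range N, ((N+1).choose i : ℝ) * Sfd N i = 0 :=
      Finset.sum_eq_zero fun i hi =>
        by rw [Sfd_eq_zero i N (Finset.mem_range.mp hi), mul_zero]
    rw [hz, zero_add, Nat.choose_self, Nat.choose_succ_self_right, Sfd_diag, ih]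
    push_cast [Nat.factorial_succ]
    ring

lemma e_lt_3 : Real.exp 1 < 3 := by
  have := Real.exp_one_lt_d9
  linarith

lemma pterm_summable' (d : ℕ) {lam : ℝ} (h0 : 0 ≤ lam) (h8 : lam ≤ 1/8) :
    Summable (pterm d lam) := by
  refine pterm_summable d h0 ?_
  nlinarith [e_lt_3, Real.exp_pos 1]

lemma closed0 {lam : ℝ} (h0 : 0 < lam) (h8 : lam ≤ 1/8) :
    ∑' n, pterm 0 lam n = (1 - lam)⁻¹ := by
  rw [master 0 h0 h8]
  have : ∀ N : ℕ, (Sfd N (N + 0) / N.factorial) * lam ^ N = lam ^ N := by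
    intro N
    rw [Nat.add_zero, Sfd_diag, div_self (by positivity : (N.factorial:ℝ) ≠ 0), one_mul]
  rw [tsum_congr this]
  exact tsum_geometric_of_lt_one h0.le (by linarith)

lemma choose_two_cast (m : ℕ) : (((m+2).choose 2 : ℕ) : ℝ) = (m+1) * (m+2) / 2 := by
  induction m with
  | zero => norm_num
  | succ m ih =>
    have h : (m+3).choose 2 = (m+2).choose 1 + (m+2).choose 2 := Nat.choose_succ_succ (m+2) 1
    rw [show m + 1 + 2 = m + 3 by omega, h]
    push_cast [ih]
    rw [Nat.choose_one_right]
    push_cast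
    ring

lemma closed1 {lam : ℝ} (h0 : 0 < lam) (h1 : lam < 1) (h8 : lam ≤ 1/8) :
    ∑' n, pterm 1 lam n = lam / (1 - lam) ^ 3 := by
  rw [master 1 h0 h8]
  have hcongr : ∀ N : ℕ, (Sfd N (N + 1) / N.factorial) * lam ^ N
      = ((N : ℝ) * (N + 1) / 2) * lam ^ N := by
    intro N
    rw [Sfd_succ_diag]
    have : (N.factorial : ℝ) ≠ 0 := by positivity
    field_simp
  rw [tsum_congr hcongr]
  have hnorm : ‖lam‖ < 1 := by rw [Real.norm_eq_abs, abs_of_nonneg h0.le]; exact h1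
  have hc : HasSum (fun m : ℕ => (((m+2).choose 2 : ℕ) : ℝ) * lam ^ m) (1 / (1 - lam) ^ 3) :=
    hasSum_choose_mul_geometric_of_norm_lt_one 2 hnorm
  have hc2 := hc.mul_left lam
  have hfun : (fun m : ℕ => lam * ((((m+2).choose 2 : ℕ) : ℝ) * lam ^ m))
      = fun m : ℕ => (((m+1 : ℕ) : ℝ) * (((m+1):ℕ) + 1) / 2) * lam ^ (m+1) := by
    funext m
    rw [choose_two_cast]
    push_cast
    ring
  rw [hfun] at hc2
  have hshift : HasSum (fun N : ℕ => ((N : ℝ) * ((N : ℝ) + 1) / 2) * lam ^ N)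
      (lam * (1 / (1 - lam) ^ 3)
        + ∑ i ∈ Finset.range 1, ((i : ℝ) * ((i : ℝ) + 1) / 2) * lam ^ i) := by
    refine (hasSum_nat_add_iff (f := fun N : ℕ => ((N : ℝ) * ((N : ℝ) + 1) / 2) * lam ^ N) 1).mp ?_
    exact hc2
  rw [hshift.tsum_eq]
  simp only [Finset.range_one, Finset.sum_singleton, Nat.cast_zero]
  rw [mul_one_div]
  norm_num

noncomputable def cc : ℕ → ℝ
  | 0 => 0
  | 1 => 0
  | (k+2) => ((k:ℝ)+2) * ((k:ℝ)+1) ^ k / k.factorial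

lemma term_eq (lam : ℝ) (k : ℕ) :
    cc (k+2) * (lam * Real.exp (-lam)) ^ (k+2)
      = (lam * Real.exp (-lam)) * (pterm 1 lam (k+1) + pterm 0 lam (k+1)) := by
  show ((k:ℝ)+2) * ((k:ℝ)+1) ^ k / k.factorial * (lam * Real.exp (-lam)) ^ (k+2) = _
  unfold pterm
  have he : Real.exp (-((k+1 : ℕ) : ℝ) * lam) = Real.exp (-lam) ^ (k+1) := by
    rw [← Real.exp_nat_mul]
    congr 1
    push_cast
    ring
  have hfac : ((k+1).factorial : ℝ) = ((k:ℝ)+1) * k.factorial := by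
    rw [Nat.factorial_succ]; push_cast; ring
  have hcast : ((k+1 : ℕ) : ℝ) = (k:ℝ) + 1 := by push_cast; ring
  rw [he, hfac, hcast, mul_pow]
  have hf : ((k:ℝ) + 1) ≠ 0 := by positivity
  have hfk : (k.factorial : ℝ) ≠ 0 := by positivity
  have hpow1 : ((k:ℝ)+1) ^ (k+1+1) = ((k:ℝ)+1) ^ k * ((k:ℝ)+1) ^ 2 := by
    rw [← pow_add]
  have hpow0 : ((k:ℝ)+1) ^ (k+1+0) = ((k:ℝ)+1) ^ k * ((k:ℝ)+1) := by
    rw [← pow_succ, Nat.add_zero]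
  rw [hpow1, hpow0]
  have hl2 : lam ^ (k+2) = lam * lam ^ (k+1) := by rw [← pow_succ']
  have hee : Real.exp (-lam) ^ (k+2) = Real.exp (-lam) * Real.exp (-lam) ^ (k+1) := by
    rw [← pow_succ']
  rw [hl2, hee]
  field_simp
  ring

lemma smallId {lam : ℝ} (h0 : 0 < lam) (h1 : lam < 1) (h8 : lam ≤ 1/8) :
    ∑' k : ℕ, cc (k+2) * (lam * Real.exp (-lam)) ^ (k+2)
      = ((1 - lam + lam ^ 2) / (1 - lam) ^ 3) * (lam * Real.exp (-lam))
          - lam * Real.exp (-lam) := by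
  have hs1 : Summable (pterm 1 lam) := pterm_summable' 1 h0.le h8
  have hs0 : Summable (pterm 0 lam) := pterm_summable' 0 h0.le h8
  have hs1' : Summable (fun k : ℕ => pterm 1 lam (k+1)) :=
    hs1.comp_injective (fun a b => by omega)
  have hs0' : Summable (fun k : ℕ => pterm 0 lam (k+1)) :=
    hs0.comp_injective (fun a b => by omega)
  have e1 : ∑' k : ℕ, pterm 1 lam (k+1) = lam / (1 - lam) ^ 3 := by
    have := hs1.tsum_eq_zero_add
    rw [closed1 h0 h1 h8] at this
    have hz : pterm 1 lam 0 = 0 := by unfold pterm; norm_num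
    rw [hz, zero_add] at this
    exact this.symm
  have e0 : ∑' k : ℕ, pterm 0 lam (k+1) = (1 - lam)⁻¹ - 1 := by
    have := hs0.tsum_eq_zero_add
    rw [closed0 h0 h8] at this
    have hz : pterm 0 lam 0 = 1 := by unfold pterm; norm_num
    rw [hz] at this
    linarith [this]
  calc ∑' k : ℕ, cc (k+2) * (lam * Real.exp (-lam)) ^ (k+2)
      = ∑' k : ℕ, (lam * Real.exp (-lam)) * (pterm 1 lam (k+1) + pterm 0 lam (k+1)) :=
        tsum_congr (term_eq lam)
    _ = (lam * Real.exp (-lam)) * ∑' k : ℕ, (pterm 1 lam (k+1) + pterm 0 lam (k+1)) :=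
        tsum_mul_left
    _ = (lam * Real.exp (-lam))
          * (∑' k : ℕ, pterm 1 lam (k+1) + ∑' k : ℕ, pterm 0 lam (k+1)) := by
        rw [Summable.tsum_add hs1' hs0']
    _ = (lam * Real.exp (-lam)) * (lam / (1 - lam) ^ 3 + ((1 - lam)⁻¹ - 1)) := by
        rw [e1, e0]
    _ = ((1 - lam + lam ^ 2) / (1 - lam) ^ 3) * (lam * Real.exp (-lam))
          - lam * Real.exp (-lam) := by
        have hne : (1 : ℝ) - lam ≠ 0 := by intro h; linarith
        field_simp
        ring

open FormalMultilinearSeries in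
lemma cc_norm_bound (n : ℕ) : ‖cc n‖ ≤ (n : ℝ) * Real.exp 1 ^ n := by
  match n with
  | 0 => simp [cc]
  | 1 => simp [cc, (Real.exp_pos 1).le]
  | (k+2) =>
    have hkey : ((k:ℝ)+1) ^ k / k.factorial ≤ Real.exp 1 ^ (k+1) := by
      have h := key_bound (k+1)
      have heq : (((k+1:ℕ)):ℝ) ^ (k+1) / (k+1).factorial = ((k:ℝ)+1) ^ k / k.factorial := by
        rw [Nat.factorial_succ]
        push_cast
        rw [pow_succ]
        have h1 : ((k:ℝ)+1) ≠ 0 := by positivity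
        have h2 : (k.factorial : ℝ) ≠ 0 := by positivity
        field_simp
      rw [heq] at h
      exact h
    show ‖((k:ℝ)+2) * ((k:ℝ)+1) ^ k / k.factorial‖ ≤ _
    rw [Real.norm_eq_abs, abs_of_nonneg (by positivity), mul_div_assoc]
    have he1 : (1:ℝ) ≤ Real.exp 1 := by linarith [Real.add_one_le_exp (1:ℝ)]
    calc ((k:ℝ)+2) * (((k:ℝ)+1) ^ k / k.factorial)
        ≤ ((k:ℝ)+2) * Real.exp 1 ^ (k+1) := by
          have : (0:ℝ) ≤ (k:ℝ)+2 := by positivity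
          exact mul_le_mul_of_nonneg_left hkey this
      _ ≤ ((k:ℝ)+2) * Real.exp 1 ^ (k+2) := by
          have : Real.exp 1 ^ (k+1) ≤ Real.exp 1 ^ (k+2) :=
            pow_le_pow_right₀ he1 (by omega)
          have h2 : (0:ℝ) ≤ (k:ℝ)+2 := by positivity
          exact mul_le_mul_of_nonneg_left this h2
      _ = ((k+2 : ℕ) : ℝ) * Real.exp 1 ^ (k+2) := by push_cast; ring

lemma cc_mul_summable {x : ℝ} (hx : |x| < Real.exp (-1)) :
    Summable (fun n : ℕ => ‖cc n‖ * |x| ^ n) := by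
  have hr : Real.exp 1 * |x| < 1 := by
    have h := mul_lt_mul_of_pos_left hx (Real.exp_pos 1)
    rwa [← Real.exp_add, add_neg_cancel, Real.exp_zero] at h
  refine Summable.of_nonneg_of_le (fun n => by positivity) (fun n => ?_)
    (summable_pow_mul_geometric_of_norm_lt_one 1
      (r := Real.exp 1 * |x|) (by rw [Real.norm_eq_abs, abs_of_nonneg (by positivity)]; exact hr))
  calc ‖cc n‖ * |x| ^ n ≤ ((n : ℝ) * Real.exp 1 ^ n) * |x| ^ n := by
        have := cc_norm_bound n
        have h2 : (0:ℝ) ≤ |x| ^ n := by positivity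
        exact mul_le_mul_of_nonneg_right this h2
    _ = (n : ℝ) ^ 1 * (Real.exp 1 * |x|) ^ n := by rw [mul_pow, pow_one]; ring

lemma cc_radius {r : ℝ≥0} (hr : (r : ℝ) < Real.exp (-1)) :
    (r : ENNReal) ≤ (FormalMultilinearSeries.ofScalars ℝ cc).radius := by
  refine FormalMultilinearSeries.le_radius_of_summable_norm _ ?_
  have habs : |(r : ℝ)| < Real.exp (-1) := by
    rw [abs_of_nonneg r.coe_nonneg]; exact hr
  have := cc_mul_summable habs
  refine this.congr fun n => ?_
  rw [FormalMultilinearSeries.ofScalars_norm, abs_of_nonneg r.coe_nonneg]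

lemma F_analyticAt {t : ℝ} (ht : |t| < Real.exp (-1)) :
    AnalyticAt ℝ (FormalMultilinearSeries.ofScalars ℝ cc).sum t := by
  set p := FormalMultilinearSeries.ofScalars ℝ cc
  have hmid : |t| < (|t| + Real.exp (-1)) / 2 := by linarith
  set r : ℝ≥0 := ⟨(|t| + Real.exp (-1)) / 2, by positivity⟩ with hrdef
  have hrlt : (r : ℝ) < Real.exp (-1) := by
    show (|t| + Real.exp (-1)) / 2 < Real.exp (-1)
    linarith [abs_nonneg t, ht]
  have hrad : (‖t‖₊ : ENNReal) < p.radius := by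
    refine lt_of_lt_of_le ?_ (cc_radius hrlt)
    rw [ENNReal.coe_lt_coe]
    rw [← NNReal.coe_lt_coe, coe_nnnorm, Real.norm_eq_abs]
    exact hmid
  have h0 : 0 < p.radius := lt_of_le_of_lt zero_le hrad
  have hball := p.hasFPowerSeriesOnBall h0
  refine hball.analyticAt_of_mem ?_
  rw [EMetric.mem_ball, edist_zero_right]
  exact hrad

lemma F_sum_eq {t : ℝ} (ht : |t| < Real.exp (-1)) :
    (FormalMultilinearSeries.ofScalars ℝ cc).sum t = ∑' k : ℕ, cc (k+2) * t ^ (k+2) := by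
  have h1 : (FormalMultilinearSeries.ofScalars ℝ cc).sum t = ∑' n : ℕ, cc n * t ^ n := by
    refine tsum_congr fun n => ?_
    rw [FormalMultilinearSeries.ofScalars_apply_eq, smul_eq_mul]
  rw [h1]
  have hsum : Summable (fun n : ℕ => cc n * t ^ n) := by
    refine Summable.of_norm ?_
    refine (cc_mul_summable ht).congr fun n => ?_
    rw [norm_mul, norm_pow, Real.norm_eq_abs, Real.norm_eq_abs]
  rw [hsum.tsum_eq_zero_add]
  have hsum1 : Summable (fun n : ℕ => cc (n+1) * t ^ (n+1)) :=
    hsum.comp_injective (fun a b => by omega)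
  rw [hsum1.tsum_eq_zero_add]
  show cc 0 * t ^ 0 + (cc 1 * t ^ 1 + _) = _
  simp [cc]

lemma map_lt {x : ℝ} (hx0 : 0 < x) (hx1 : x < 1) : |x * Real.exp (-x)| < Real.exp (-1) := by
  rw [abs_of_nonneg (by positivity)]
  have h1 : x < Real.exp (x - 1) := by
    have := Real.add_one_lt_exp (x := x - 1) (by intro h; apply absurd hx1; simp; linarith)
    linarith
  calc x * Real.exp (-x) < Real.exp (x - 1) * Real.exp (-x) := by
        exact mul_lt_mul_of_pos_right h1 (Real.exp_pos _)
    _ = Real.exp (-1) := by rw [← Real.exp_add]; ring_nf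

noncomputable def Gfun : ℝ → ℝ := fun x =>
  (FormalMultilinearSeries.ofScalars ℝ cc).sum (x * Real.exp (-x))
    - (((1 - x + x ^ 2) / (1 - x) ^ 3) * (x * Real.exp (-x)) - x * Real.exp (-x))

lemma inner_analytic (x : ℝ) : AnalyticAt ℝ (fun y : ℝ => y * Real.exp (-y)) x := by
  exact (analyticAt_id).mul ((analyticAt_id).neg.rexp)

lemma G_analytic : AnalyticOnNhd ℝ Gfun (Set.Ioo (0:ℝ) 1) := by
  intro x hx
  obtain ⟨hx0, hx1⟩ := hx
  have hmap : AnalyticAt ℝ (FormalMultilinearSeries.ofScalars ℝ cc).sum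
      ((fun y : ℝ => y * Real.exp (-y)) x) := F_analyticAt (map_lt hx0 hx1)
  have h1 : AnalyticAt ℝ (fun y : ℝ =>
      (FormalMultilinearSeries.ofScalars ℝ cc).sum (y * Real.exp (-y))) x :=
    AnalyticAt.comp (f := fun y : ℝ => y * Real.exp (-y)) hmap (inner_analytic x)
  have hne : ((1:ℝ) - x) ^ 3 ≠ 0 := by
    have : (1:ℝ) - x ≠ 0 := by intro h; linarith
    positivity
  have h2 : AnalyticAt ℝ (fun y : ℝ => (1 - y + y ^ 2) / (1 - y) ^ 3) x := by
    refine AnalyticAt.div ?_ ?_ hne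
    · exact ((analyticAt_const.sub analyticAt_id).add ((analyticAt_id).pow 2))
    · exact (analyticAt_const.sub analyticAt_id).pow 3
  exact h1.sub ((h2.mul (inner_analytic x)).sub (inner_analytic x))

lemma G_zero : Set.EqOn Gfun 0 (Set.Ioo (0:ℝ) 1) := by
  have hsmall : Set.EqOn Gfun 0 (Set.Ioo (0:ℝ) (1/8)) := by
    intro x hx
    obtain ⟨hx0, hx8⟩ := hx
    have hx1 : x < 1 := by linarith
    have := smallId hx0 hx1 (by linarith)
    show Gfun x = 0
    unfold Gfun
    rw [F_sum_eq (map_lt hx0 hx1), this]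
    ring
  refine G_analytic.eqOn_zero_of_preconnected_of_eventuallyEq_zero
    (isPreconnected_Ioo) (z₀ := (1/16 : ℝ)) (by norm_num) ?_
  have hmem : Set.Ioo (0:ℝ) (1/8) ∈ nhds (1/16 : ℝ) :=
    isOpen_Ioo.mem_nhds (by norm_num)
  exact Filter.eventuallyEq_of_mem hmem hsmall

/-- Second-moment series identity: for `0 < λ < 1`,
`∑_{x=2}^∞ (x (x-1)^{x-2}/(x-2)!) λ^x e^{-xλ}
  = ((1-λ+λ²)/(1-λ)³) λe^{-λ} - λe^{-λ}` (indexed by `x = k + 2`). -/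
theorem stmt11 (lam : ℝ) (h0 : 0 < lam) (h1 : lam < 1) :
    ∑' k : ℕ,
      ((k + 2 : ℕ) : ℝ) * ((((k + 1 : ℕ) ^ k : ℕ)) : ℝ) / (Nat.factorial k)
        * lam ^ (k + 2) * Real.exp (-((k + 2 : ℕ) : ℝ) * lam)
    = ((1 - lam + lam ^ 2) / (1 - lam) ^ 3) * (lam * Real.exp (-lam))
        - lam * Real.exp (-lam) := by
  have hterm : ∀ k : ℕ,
      ((k + 2 : ℕ) : ℝ) * ((((k + 1 : ℕ) ^ k : ℕ)) : ℝ) / (Nat.factorial k)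
        * lam ^ (k + 2) * Real.exp (-((k + 2 : ℕ) : ℝ) * lam)
      = cc (k+2) * (lam * Real.exp (-lam)) ^ (k+2) := by
    intro k
    show _ = ((k:ℝ)+2) * ((k:ℝ)+1) ^ k / k.factorial * (lam * Real.exp (-lam)) ^ (k+2)
    have he : Real.exp (-((k+2 : ℕ) : ℝ) * lam) = Real.exp (-lam) ^ (k+2) := by
      rw [← Real.exp_nat_mul]
      congr 1
      push_cast
      ring
    rw [he, mul_pow]
    push_cast
    ring
  rw [tsum_congr hterm]
  have hG := G_zero (Set.mem_Ioo.mpr ⟨h0, h1⟩)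
  have hG' : Gfun lam = 0 := hG
  unfold Gfun at hG'
  rw [F_sum_eq (map_lt h0 h1)] at hG'
  linarith [hG']
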